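/- Let d ∈ ℝ and k_q, k_e > 0, let θ : [0,∞) → ℝ be continuous, and let q̃ : [0,∞) → ℝ², ẽ : [0,∞) → ℝ³ be differentiable solutions of q̃′(t) = −k_q · q̃(t) − C̄(θ(t))ᵀ ẽ(t), ẽ′(t) = C̄(θ(t)) q̃(t) − k_e · (0, ẽ₂(t), ẽ₃(t)), where C̄(θ) is the 3×2 matrix with rows (0, 1), (cos θ, −d sin θ), (sin θ, d cos θ). Then for every t ≥ 0, ∫₀ᵗ ( k_q ‖q̃(s)‖² + k_e (ẽ₂(s)² + ẽ₃(s)²) ) ds ≤ ½‖q̃(0)‖² + ½‖ẽ(0)‖². Consequently ∫₀^∞ ‖q̃(s)‖² ds < ∞ and ∫₀^∞ (ẽ₂(s)² + ẽ₃(s)²) ds < ∞, i.e. q̃ and the planar position error e_z = (ẽ₂, ẽ₃) are square integrable on [0,∞). -/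

import Mathlib

open Matrix Filter Real MeasureTheory

/-- The 3×2 kinematic matrix `C̄(θ)` of the DDWMR, with rows
`(0, 1)`, `(cos θ, −d sin θ)`, `(sin θ, d cos θ)`. -/
noncomputable def Cbar (d θ : ℝ) : Matrix (Fin 3) (Fin 2) ℝ :=
  !![0, 1; Real.cos θ, -d * Real.sin θ; Real.sin θ, d * Real.cos θ]

/-- Square integrability of the DDWMR closed-loop tracking errors: along the
error dynamics, for every `t ≥ 0`,
`∫₀ᵗ (k_q ‖q̃(s)‖² + k_e (ẽ₂(s)² + ẽ₃(s)²)) ds ≤ ½‖q̃(0)‖² + ½‖ẽ(0)‖²`;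
consequently `q̃` and the planar position error `e_z = (ẽ₂, ẽ₃)` are square
integrable on `[0,∞)`. -/
theorem ddwmr_tracking_errors_square_integrable
    (d kq ke : ℝ) (hkq : 0 < kq) (hke : 0 < ke)
    (θ : ℝ → ℝ) (hθ : ContinuousOn θ (Set.Ici (0 : ℝ)))
    (qt : ℝ → (Fin 2 → ℝ)) (et : ℝ → (Fin 3 → ℝ))
    (hq : ∀ t, 0 ≤ t →
      HasDerivAt qt ((-kq) • qt t - (Cbar d (θ t))ᵀ.mulVec (et t)) t)
    (he : ∀ t, 0 ≤ t →
      HasDerivAt et ((Cbar d (θ t)).mulVec (qt t) - ke • ![(0 : ℝ), et t 1, et t 2]) t) :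
    (∀ t, 0 ≤ t →
      (∫ s in (0 : ℝ)..t, (kq * (∑ i, (qt s i) ^ 2) + ke * ((et s 1) ^ 2 + (et s 2) ^ 2)))
        ≤ (1 / 2) * (∑ i, (qt 0 i) ^ 2) + (1 / 2) * (∑ i, (et 0 i) ^ 2)) ∧
    IntegrableOn (fun s => ∑ i, (qt s i) ^ 2) (Set.Ici (0 : ℝ)) ∧
    IntegrableOn (fun s => (et s 1) ^ 2 + (et s 2) ^ 2) (Set.Ici (0 : ℝ)) := by
  set V : ℝ → ℝ := fun t => (1 / 2) * (∑ i, (qt t i) ^ 2) + (1 / 2) * (∑ i, (et t i) ^ 2)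
    with hVdef
  set F : ℝ → ℝ := fun s => kq * (∑ i, (qt s i) ^ 2) + ke * ((et s 1) ^ 2 + (et s 2) ^ 2)
    with hFdef
  have hVnonneg : ∀ t, 0 ≤ V t := by
    intro t
    have : (0:ℝ) ≤ ∑ i, (qt t i) ^ 2 := Finset.sum_nonneg fun i _ => sq_nonneg _
    have : (0:ℝ) ≤ ∑ i, (et t i) ^ 2 := Finset.sum_nonneg fun i _ => sq_nonneg _
    positivity
  -- derivative of V
  have hVderiv : ∀ t, 0 ≤ t → HasDerivAt V (-(F t)) t := by
    intro t ht
    have hqc := hasDerivAt_pi.mp (hq t ht)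
    have hec := hasDerivAt_pi.mp (he t ht)
    have h1 : HasDerivAt (fun s => ∑ i, (qt s i) ^ 2)
        (∑ i : Fin 2, (2 : ℕ) * qt t i ^ 1 * ((-kq) • qt t - (Cbar d (θ t))ᵀ.mulVec (et t)) i) t :=
      HasDerivAt.fun_sum fun i _ => (hqc i).pow 2
    have h2 : HasDerivAt (fun s => ∑ i, (et s i) ^ 2)
        (∑ i : Fin 3, (2 : ℕ) * et t i ^ 1 *
          ((Cbar d (θ t)).mulVec (qt t) - ke • ![(0 : ℝ), et t 1, et t 2]) i) t :=
      HasDerivAt.fun_sum fun i _ => (hec i).pow 2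
    have h3 := (h1.const_mul (1 / 2 : ℝ)).fun_add (h2.const_mul (1 / 2 : ℝ))
    refine h3.congr_deriv ?_
    simp only [hFdef, Cbar, Matrix.mulVec, dotProduct, Fin.sum_univ_two,
      Fin.sum_univ_three, Matrix.transpose_apply, Matrix.cons_val', Matrix.cons_val_zero,
      Matrix.cons_val_one, Matrix.head_cons, Matrix.empty_val', Matrix.cons_val_fin_one,
      Matrix.head_fin_const, Pi.sub_apply, Pi.smul_apply, smul_eq_mul,
      Matrix.of_apply, Matrix.cons_val_two, Matrix.tail_cons, pow_one]
    ring
  -- continuity of components on Ici 0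
  have hqcont : ContinuousOn qt (Set.Ici (0:ℝ)) := fun s hs =>
    (hq s hs).continuousAt.continuousWithinAt
  have hecont : ContinuousOn et (Set.Ici (0:ℝ)) := fun s hs =>
    (he s hs).continuousAt.continuousWithinAt
  have hFcont : ContinuousOn F (Set.Ici (0:ℝ)) := by
    apply ContinuousOn.add
    · exact (continuousOn_const.mul (continuousOn_finset_sum _ fun i _ =>
        (((continuous_apply i).comp_continuousOn hqcont)).pow 2))
    · exact (continuousOn_const.mul
        ((((continuous_apply (1 : Fin 3)).comp_continuousOn hecont).pow 2).add
          (((continuous_apply (2 : Fin 3)).comp_continuousOn hecont).pow 2)))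
  have hFint : ∀ t : ℝ, 0 ≤ t → IntervalIntegrable F volume 0 t := by
    intro t ht
    apply ContinuousOn.intervalIntegrable
    rw [Set.uIcc_of_le ht]
    exact hFcont.mono (Set.Icc_subset_Ici_self)
  -- key bound
  have key : ∀ t, 0 ≤ t → (∫ s in (0:ℝ)..t, F s) ≤ V 0 := by
    intro t ht
    have hftc : ∫ s in (0:ℝ)..t, -(F s) = V t - V 0 := by
      apply intervalIntegral.integral_eq_sub_of_hasDerivAt
      · intro s hs
        rw [Set.uIcc_of_le ht] at hs
        exact hVderiv s hs.1
      · exact (hFint t ht).neg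
    rw [intervalIntegral.integral_neg] at hftc
    have : (∫ s in (0:ℝ)..t, F s) = V 0 - V t := by linarith
    linarith [hVnonneg t]
  have hFnonneg : ∀ s, 0 ≤ F s := by
    intro s
    have h1 : (0:ℝ) ≤ ∑ i, (qt s i) ^ 2 := Finset.sum_nonneg fun i _ => sq_nonneg _
    have h2 : (0:ℝ) ≤ (et s 1) ^ 2 + (et s 2) ^ 2 := by positivity
    simp only [hFdef]
    positivity
  -- integrability of a generic nonneg continuous function dominated by F / c
  have gen : ∀ (c : ℝ) (_ : 0 < c) (g : ℝ → ℝ), ContinuousOn g (Set.Ici (0:ℝ)) →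
      (∀ s, 0 ≤ g s) → (∀ s, 0 ≤ s → c * g s ≤ F s) →
      IntegrableOn g (Set.Ici (0:ℝ)) := by
    intro c hc g hgcont hgnn hgle
    have hgint : ∀ t : ℝ, 0 ≤ t → IntervalIntegrable g volume 0 t := by
      intro t ht
      apply ContinuousOn.intervalIntegrable
      rw [Set.uIcc_of_le ht]
      exact hgcont.mono (Set.Icc_subset_Ici_self)
    have hIoi : IntegrableOn g (Set.Ioi (0:ℝ)) := by
      apply integrableOn_Ioi_of_intervalIntegral_norm_bounded (V 0 / c) 0
        (f := g) (b := fun t : ℝ => max t 0) (l := atTop)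
      · intro i
        have hi : (0:ℝ) ≤ max i 0 := le_max_right _ _
        exact (hgint _ hi).1
      · exact tendsto_atTop_mono (fun t => le_max_left t 0) tendsto_id
      · filter_upwards with i
        have hi : (0:ℝ) ≤ max i 0 := le_max_right _ _
        have h1 : (∫ x in (0:ℝ)..(max i 0), ‖g x‖) = ∫ x in (0:ℝ)..(max i 0), g x := by
          apply intervalIntegral.integral_congr
          intro x _
          exact Real.norm_of_nonneg (hgnn x)
        rw [h1]
        have h2 : (∫ x in (0:ℝ)..(max i 0), c * g x) ≤ ∫ x in (0:ℝ)..(max i 0), F x := by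
          apply intervalIntegral.integral_mono_on hi ((hgint _ hi).const_mul c) (hFint _ hi)
          intro x hx
          exact hgle x hx.1
        rw [intervalIntegral.integral_const_mul] at h2
        have h3 := key _ hi
        rw [le_div_iff₀ hc, mul_comm]
        linarith
    rwa [integrableOn_Ici_iff_integrableOn_Ioi]
  refine ⟨key, ?_, ?_⟩
  · apply gen kq hkq _ ?_ ?_ ?_
    · exact continuousOn_finset_sum _ fun i _ =>
        (((continuous_apply i).comp_continuousOn hqcont)).pow 2
    · intro s; exact Finset.sum_nonneg fun i _ => sq_nonneg _
    · intro s hs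
      have : (0:ℝ) ≤ ke * ((et s 1) ^ 2 + (et s 2) ^ 2) := by positivity
      simp only [hFdef]
      linarith
  · apply gen ke hke _ ?_ ?_ ?_
    · exact (((continuous_apply (1 : Fin 3)).comp_continuousOn hecont).pow 2).add
        (((continuous_apply (2 : Fin 3)).comp_continuousOn hecont).pow 2)
    · intro s; positivity
    · intro s hs
      have h1 : (0:ℝ) ≤ kq * ∑ i, (qt s i) ^ 2 := by
        have : (0:ℝ) ≤ ∑ i, (qt s i) ^ 2 := Finset.sum_nonneg fun i _ => sq_nonneg _
        positivity
      simp only [hFdef]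
      linarith
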